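/- Let σ, Θ ∈ ℝ with σ > 0 and μ > 0, and consider the operator A on the space Ĥ of 2π-periodic functions with zero mean, acting on Fourier modes e^{ikξ} (k ∈ ℤ, k ≠ 0) by A e^{ikξ} = -((σk² + Θ)/(4μ|k|)) e^{ikξ}. Then the spectrum of A (as an operator from Ĥ^r to Ĥ^{r-1}) is the closure of the set { -(σk² + Θ)/(4μk) : k ∈ ℕ, k ≥ 1 }, and if σ + Θ > 0 then every spectral value λ satisfies Re λ ≤ -ϑ₀, where ϑ₀ = (σ+Θ)/(4μ) if σ ≥ Θ and ϑ₀ = √(σΘ)/(2μ) if σ < Θ. -/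

import Mathlib

open Real

/-- The eigenvalue of the linearization at the flat interface on the Fourier mode `e^{ikξ}`. -/
noncomputable def eigenvalue (σ Θ μ : ℝ) (k : {k : ℤ // k ≠ 0}) : ℝ :=
  -((σ * ((k.1 : ℝ)) ^ 2 + Θ) / (4 * μ * |(k.1 : ℝ)|))

/-- The periodic Sobolev space `Ĥ^s` of order `s` with zero mean, modelled as the set of
Fourier-coefficient sequences over the nonzero modes with `Σ |k|^{2s} |f_k|² < ∞`. -/
def zeroMeanSobolev (s : ℝ) : Set ({k : ℤ // k ≠ 0} → ℂ) :=
  {f | Summable fun k : {k : ℤ // k ≠ 0} => |(k.1 : ℝ)| ^ (2 * s) * ‖f k‖ ^ 2}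

/-- The map `λ - A` on Fourier-coefficient sequences, where `A` acts diagonally with
eigenvalues `-(σk² + Θ)/(4μ|k|)`. -/
noncomputable def resolventMap (σ Θ μ : ℝ) (z : ℂ) (f : {k : ℤ // k ≠ 0} → ℂ) :
    {k : ℤ // k ≠ 0} → ℂ :=
  fun k => (z - (eigenvalue σ Θ μ k : ℂ)) * f k

/-- The spectrum of `A : Ĥ^r → Ĥ^{r-1}`: those `λ ∈ ℂ` for which `λ - A` fails to be a
bijection from `Ĥ^r` onto `Ĥ^{r-1}`. -/
noncomputable def spectrumSet (σ Θ μ r : ℝ) : Set ℂ :=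
  {z : ℂ | ¬ Set.BijOn (resolventMap σ Θ μ z) (zeroMeanSobolev r) (zeroMeanSobolev (r - 1))}

namespace SpecAux

/-- The real eigenvalue on the `n`-th mode, `n ≥ 1`. -/
noncomputable def lam (σ Θ μ : ℝ) (n : ℕ) : ℝ := -((σ * (n : ℝ) ^ 2 + Θ) / (4 * μ * (n : ℝ)))

/-- The set of eigenvalues as a subset of `ℂ`. -/
def Eset (σ Θ μ : ℝ) : Set ℂ := {z : ℂ | ∃ n : ℕ, 1 ≤ n ∧ z = ((lam σ Θ μ n : ℝ) : ℂ)}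

lemma one_le_absk (k : {k : ℤ // k ≠ 0}) : 1 ≤ |(k.1 : ℝ)| := by
  have h : 1 ≤ |k.1| := Int.one_le_abs (by exact_mod_cast k.2)
  calc (1:ℝ) ≤ ((|k.1| : ℤ) : ℝ) := by exact_mod_cast h
    _ = |(k.1 : ℝ)| := by push_cast; rfl

lemma one_le_natAbs (k : {k : ℤ // k ≠ 0}) : 1 ≤ k.1.natAbs := by
  have := k.2; omega

lemma eig_eq (σ Θ μ : ℝ) (k : {k : ℤ // k ≠ 0}) :
    eigenvalue σ Θ μ k = lam σ Θ μ k.1.natAbs := by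
  unfold eigenvalue lam
  have h1 : ((k.1.natAbs : ℕ) : ℝ) = |(k.1 : ℝ)| := by
    rw [Nat.cast_natAbs]; push_cast; rfl
  rw [h1, sq_abs]

lemma isClosed_Eset (σ Θ μ : ℝ) (hσ : 0 < σ) (hμ : 0 < μ) : IsClosed (Eset σ Θ μ) := by
  have hE : Eset σ Θ μ = ⋃ m : ℕ, ({((lam σ Θ μ (m+1) : ℝ) : ℂ)} : Set ℂ) := by
    ext z
    simp only [Eset, Set.mem_setOf_eq, Set.mem_iUnion, Set.mem_singleton_iff]
    constructor
    · rintro ⟨n, hn, rfl⟩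
      exact ⟨n - 1, by rw [Nat.sub_add_cancel hn]⟩
    · rintro ⟨m, rfl⟩
      exact ⟨m + 1, by omega, rfl⟩
  rw [hE]
  refine LocallyFinite.isClosed_iUnion ?_ (fun m => isClosed_singleton)
  intro x
  refine ⟨Metric.ball x 1, Metric.ball_mem_nhds x one_pos, ?_⟩
  apply Set.Finite.subset (Set.finite_Iic ⌈((1 - x.re) * (4*μ) + |Θ|) / σ⌉₊)
  intro m hm
  simp only [Set.mem_setOf_eq] at hm
  rw [Set.singleton_inter_nonempty, Metric.mem_ball] at hm
  set t : ℝ := ((m : ℝ) + 1) with ht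
  have htpos : (1:ℝ) ≤ t := by
    rw [ht]; have : (0:ℝ) ≤ (m:ℝ) := Nat.cast_nonneg m; linarith
  have hre : |lam σ Θ μ (m+1) - x.re| < 1 := by
    have h1 : (((lam σ Θ μ (m+1) : ℝ) : ℂ) - x).re = lam σ Θ μ (m+1) - x.re := by simp
    have h2 := Complex.abs_re_le_norm (((lam σ Θ μ (m+1) : ℝ) : ℂ) - x)
    rw [h1] at h2
    have h3 : dist ((lam σ Θ μ (m+1) : ℝ) : ℂ) x = ‖((lam σ Θ μ (m+1) : ℝ) : ℂ) - x‖ :=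
      Complex.dist_eq _ _
    rw [h3] at hm
    linarith
  have hden : (0:ℝ) < 4 * μ * t := by positivity
  have hlt : x.re - 1 < -((σ * t ^ 2 + Θ) / (4 * μ * t)) := by
    have := abs_lt.mp hre
    have hl : lam σ Θ μ (m+1) = -((σ * t ^ 2 + Θ) / (4 * μ * t)) := by
      unfold lam; rw [ht]; push_cast; ring
    rw [hl] at this; linarith [this.1]
  have h2 : σ * t ^ 2 + Θ < (1 - x.re) * (4 * μ * t) := by
    have hdiv : (σ * t ^ 2 + Θ) / (4 * μ * t) < 1 - x.re := by linarith
    exact (div_lt_iff₀ hden).mp hdiv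
  have key : σ * t ≤ (1 - x.re) * (4*μ) + |Θ| := by
    nlinarith [neg_abs_le Θ, abs_nonneg Θ, mul_nonneg (abs_nonneg Θ) (by linarith : (0:ℝ) ≤ t - 1)]
  have hC : (m : ℝ) ≤ ((1 - x.re) * (4*μ) + |Θ|) / σ := by
    rw [le_div_iff₀ hσ]
    nlinarith
  have := hC.trans (Nat.le_ceil _)
  exact_mod_cast this

lemma lam_mem_spectrum (σ Θ μ r : ℝ) (n : ℕ) (hn : 1 ≤ n) :
    ((lam σ Θ μ n : ℝ) : ℂ) ∈ spectrumSet σ Θ μ r := by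
  simp only [spectrumSet, Set.mem_setOf_eq]
  intro hB
  have hk0 : ((n : ℤ) : ℤ) ≠ 0 := by exact_mod_cast Nat.one_le_iff_ne_zero.mp hn
  set k₀ : {k : ℤ // k ≠ 0} := ⟨(n : ℤ), hk0⟩ with hk₀
  set e : {k : ℤ // k ≠ 0} → ℂ := fun k => if k = k₀ then 1 else 0 with he_def
  have he : e ∈ zeroMeanSobolev r := by
    refine summable_of_ne_finset_zero (s := {k₀}) ?_
    intro k hk
    simp only [Finset.mem_singleton] at hk
    simp [he_def, hk]
  have h0 : (0 : {k : ℤ // k ≠ 0} → ℂ) ∈ zeroMeanSobolev r := by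
    simpa [zeroMeanSobolev] using summable_zero
  have heig : eigenvalue σ Θ μ k₀ = lam σ Θ μ n := by
    rw [eig_eq]
    norm_num [hk₀]
  have heq : resolventMap σ Θ μ ((lam σ Θ μ n : ℝ) : ℂ) e
      = resolventMap σ Θ μ ((lam σ Θ μ n : ℝ) : ℂ) (0 : {k : ℤ // k ≠ 0} → ℂ) := by
    funext k
    by_cases hk : k = k₀
    · subst hk
      simp [resolventMap, heig]
    · simp [resolventMap, he_def, hk]
  have := hB.injOn he h0 heq
  have h1 := congrFun this k₀
  simp [he_def] at h1

lemma abs_eig_le (σ Θ μ : ℝ) (hσ : 0 < σ) (hμ : 0 < μ) (k : {k : ℤ // k ≠ 0}) :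
    |eigenvalue σ Θ μ k| ≤ (σ + |Θ|) / (4 * μ) * |(k.1 : ℝ)| := by
  set a : ℝ := |(k.1 : ℝ)| with ha
  have ha1 : 1 ≤ a := one_le_absk k
  have ha0 : 0 < a := lt_of_lt_of_le one_pos ha1
  have hsq : (k.1 : ℝ) ^ 2 = a ^ 2 := (sq_abs _).symm
  unfold eigenvalue
  rw [abs_neg, abs_div, hsq]
  rw [abs_of_pos (by positivity : (0:ℝ) < 4 * μ * a)]
  rw [div_le_iff₀ (by positivity)]
  have h1 : |σ * a ^ 2 + Θ| ≤ σ * a ^ 2 + |Θ| := by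
    calc |σ * a ^ 2 + Θ| ≤ |σ * a ^ 2| + |Θ| := abs_add_le _ _
      _ = σ * a ^ 2 + |Θ| := by rw [abs_of_nonneg (by positivity)]
  have h2 : |Θ| ≤ |Θ| * a ^ 2 := by
    nlinarith [mul_nonneg (abs_nonneg Θ) (by nlinarith : (0:ℝ) ≤ a ^ 2 - 1)]
  calc |σ * a ^ 2 + Θ| ≤ σ * a ^ 2 + |Θ| * a ^ 2 := by linarith
    _ = (σ + |Θ|) / (4 * μ) * a * (4 * μ * a) := by field_simp

lemma exists_lower (σ Θ μ : ℝ) (hσ : 0 < σ) (hμ : 0 < μ) (z : ℂ) (ε : ℝ) (hε : 0 < ε)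
    (hfar : ∀ k : {k : ℤ // k ≠ 0}, ε ≤ ‖z - ((eigenvalue σ Θ μ k : ℝ) : ℂ)‖) :
    ∃ c > 0, ∀ k : {k : ℤ // k ≠ 0},
      c * |(k.1 : ℝ)| ≤ ‖z - ((eigenvalue σ Θ μ k : ℝ) : ℂ)‖ := by
  set B : ℝ := |Θ| / (4 * μ) + ‖z‖ with hB
  have hB0 : 0 ≤ B := by positivity
  set N : ℝ := 8 * μ * (B + 1) / σ with hN
  have hN0 : 0 < N := by positivity
  refine ⟨min (σ / (8 * μ)) (ε / N), lt_min (by positivity) (by positivity), ?_⟩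
  intro k
  set a : ℝ := |(k.1 : ℝ)| with ha
  have ha1 : 1 ≤ a := one_le_absk k
  have ha0 : 0 < a := lt_of_lt_of_le one_pos ha1
  by_cases hcase : a ≤ N
  · calc min (σ / (8 * μ)) (ε / N) * a ≤ (ε / N) * a := by
          apply mul_le_mul_of_nonneg_right (min_le_right _ _) ha0.le
      _ ≤ (ε / N) * N := by
          apply mul_le_mul_of_nonneg_left hcase (by positivity)
      _ = ε := by field_simp
      _ ≤ _ := hfar k
  · push_neg at hcase
    have hsq : (k.1 : ℝ) ^ 2 = a ^ 2 := (sq_abs _).symm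
    have heig_lb : σ * a / (4 * μ) - |Θ| / (4 * μ) ≤ |eigenvalue σ Θ μ k| := by
      unfold eigenvalue
      rw [abs_neg, abs_div, hsq, abs_of_pos (by positivity : (0:ℝ) < 4 * μ * a)]
      rw [le_div_iff₀ (by positivity)]
      have h1 : σ * a ^ 2 - |Θ| ≤ |σ * a ^ 2 + Θ| := by
        have h3 := neg_abs_le Θ
        calc σ * a ^ 2 - |Θ| ≤ σ * a ^ 2 + Θ := by linarith
          _ ≤ |σ * a ^ 2 + Θ| := le_abs_self _
      have h5 : |Θ| ≤ |Θ| * a := by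
        nlinarith [mul_nonneg (abs_nonneg Θ) (by linarith : (0:ℝ) ≤ a - 1)]
      calc (σ * a / (4 * μ) - |Θ| / (4 * μ)) * (4 * μ * a)
          = σ * a ^ 2 - |Θ| * a := by field_simp
        _ ≤ σ * a ^ 2 - |Θ| := by linarith
        _ ≤ |σ * a ^ 2 + Θ| := h1
    have hnorm : |eigenvalue σ Θ μ k| - ‖z‖ ≤ ‖z - ((eigenvalue σ Θ μ k : ℝ) : ℂ)‖ := by
      have h1 : ‖((eigenvalue σ Θ μ k : ℝ) : ℂ)‖ - ‖z‖ ≤ ‖z - ((eigenvalue σ Θ μ k : ℝ) : ℂ)‖ := by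
        have := norm_sub_norm_le (((eigenvalue σ Θ μ k : ℝ) : ℂ)) z
        rw [norm_sub_rev] at this
        linarith
      rw [Complex.norm_real, Real.norm_eq_abs] at h1
      exact h1
    have hNa : 8 * μ * (B + 1) < σ * a := by
      rw [hN, div_lt_iff₀ hσ] at hcase
      linarith [hcase]
    have key : σ / (8 * μ) * a ≤ σ * a / (4 * μ) - |Θ| / (4 * μ) - ‖z‖ := by
      rw [hB] at hNa
      have h3 : 8 * μ * (|Θ| / (4 * μ) + ‖z‖ + 1) = 2 * |Θ| + 8 * μ * ‖z‖ + 8 * μ := by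
        field_simp; ring
      have h2 : 2 * |Θ| + 8 * μ * ‖z‖ + 8 * μ < σ * a := by linarith
      have expand : σ * a / (4 * μ) - |Θ| / (4 * μ) - ‖z‖ - σ / (8 * μ) * a
          = (σ * a - 2 * |Θ| - 8 * μ * ‖z‖) / (8 * μ) := by field_simp; ring
      have hnn : 0 ≤ (σ * a - 2 * |Θ| - 8 * μ * ‖z‖) / (8 * μ) :=
        div_nonneg (by linarith) (by positivity)
      linarith
    calc min (σ / (8 * μ)) (ε / N) * a ≤ σ / (8 * μ) * a := by
          apply mul_le_mul_of_nonneg_right (min_le_left _ _) ha0.le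
      _ ≤ σ * a / (4 * μ) - |Θ| / (4 * μ) - ‖z‖ := key
      _ ≤ |eigenvalue σ Θ μ k| - ‖z‖ := by linarith
      _ ≤ _ := hnorm

lemma weight_eq (a r : ℝ) (ha : 1 ≤ a) : a ^ (2 * (r - 1)) = a ^ (2 * r) / a ^ (2:ℕ) := by
  have ha0 : 0 < a := lt_of_lt_of_le one_pos ha
  have h1 : 2 * (r - 1) = 2 * r - 2 := by ring
  rw [h1, rpow_sub ha0, show (2:ℝ) = ((2:ℕ):ℝ) by norm_num, rpow_natCast]

lemma bijOn_resolvent (σ Θ μ r : ℝ) (z : ℂ) (ε c C : ℝ) (hε : 0 < ε) (hc : 0 < c) (hC : 0 ≤ C)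
    (hfar : ∀ k : {k : ℤ // k ≠ 0}, ε ≤ ‖z - ((eigenvalue σ Θ μ k : ℝ) : ℂ)‖)
    (hlow : ∀ k : {k : ℤ // k ≠ 0}, c * |(k.1 : ℝ)| ≤ ‖z - ((eigenvalue σ Θ μ k : ℝ) : ℂ)‖)
    (hup : ∀ k : {k : ℤ // k ≠ 0}, ‖z - ((eigenvalue σ Θ μ k : ℝ) : ℂ)‖ ≤ C * |(k.1 : ℝ)|) :
    Set.BijOn (resolventMap σ Θ μ z) (zeroMeanSobolev r) (zeroMeanSobolev (r - 1)) := by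
  have hd : ∀ k : {k : ℤ // k ≠ 0}, z - ((eigenvalue σ Θ μ k : ℝ) : ℂ) ≠ 0 := by
    intro k
    have := hfar k
    intro h0
    rw [h0, norm_zero] at this
    linarith
  refine ⟨?_, ?_, ?_⟩
  · intro f hf
    simp only [zeroMeanSobolev, Set.mem_setOf_eq] at hf ⊢
    refine Summable.of_nonneg_of_le (fun k => by positivity)
      (fun k => ?_) (hf.mul_left (C ^ 2))
    set a : ℝ := |(k.1 : ℝ)| with ha
    have ha1 : 1 ≤ a := one_le_absk k
    have ha0 : 0 < a := lt_of_lt_of_le one_pos ha1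
    rw [weight_eq a r ha1]
    simp only [resolventMap]
    rw [norm_mul, mul_pow]
    set d : ℝ := ‖z - ((eigenvalue σ Θ μ k : ℝ) : ℂ)‖ with hdk
    have hdle : d ≤ C * a := hup k
    have hd0 : 0 ≤ d := norm_nonneg _
    have h1 : d ^ 2 ≤ C ^ 2 * a ^ 2 := by nlinarith
    have hP : (0:ℝ) ≤ a ^ (2 * r) * ‖f k‖ ^ 2 := by positivity
    calc a ^ (2 * r) / a ^ (2:ℕ) * (d ^ 2 * ‖f k‖ ^ 2)
        = (a ^ (2 * r) * ‖f k‖ ^ 2) * (d ^ 2 / a ^ (2:ℕ)) := by ring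
      _ ≤ (a ^ (2 * r) * ‖f k‖ ^ 2) * C ^ 2 := by
          apply mul_le_mul_of_nonneg_left _ hP
          rw [div_le_iff₀ (by positivity)]
          nlinarith
      _ = C ^ 2 * (a ^ (2 * r) * ‖f k‖ ^ 2) := by ring
  · intro f hf g hg heq
    funext k
    exact mul_left_cancel₀ (hd k) (congrFun heq k)
  · intro g hg
    simp only [zeroMeanSobolev, Set.mem_setOf_eq] at hg
    refine ⟨fun k => g k / (z - ((eigenvalue σ Θ μ k : ℝ) : ℂ)), ?_, ?_⟩
    · simp only [zeroMeanSobolev, Set.mem_setOf_eq]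
      refine Summable.of_nonneg_of_le (fun k => by positivity)
        (fun k => ?_) (hg.mul_left (c⁻¹ ^ 2))
      set a : ℝ := |(k.1 : ℝ)| with ha
      have ha1 : 1 ≤ a := one_le_absk k
      have ha0 : 0 < a := lt_of_lt_of_le one_pos ha1
      set d : ℝ := ‖z - ((eigenvalue σ Θ μ k : ℝ) : ℂ)‖ with hdk
      have hdge : c * a ≤ d := hlow k
      have hd0 : 0 < d := lt_of_lt_of_le (by positivity) hdge
      rw [norm_div, div_pow]
      rw [weight_eq a r ha1]
      have h1 : a ^ (2:ℕ) * c ^ 2 ≤ d ^ 2 := by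
        have := pow_le_pow_left₀ (mul_nonneg hc.le ha0.le) hdge 2
        nlinarith [this]
      have key : a ^ (2:ℕ) / d ^ 2 ≤ c⁻¹ ^ 2 := by
        rw [div_le_iff₀ (by positivity), inv_pow, inv_mul_eq_div, le_div_iff₀ (by positivity)]
        nlinarith
      have hP : (0:ℝ) ≤ a ^ (2 * r) / a ^ (2:ℕ) * ‖g k‖ ^ 2 := by positivity
      calc a ^ (2 * r) * (‖g k‖ ^ 2 / d ^ 2)
          = (a ^ (2 * r) / a ^ (2:ℕ) * ‖g k‖ ^ 2) * (a ^ (2:ℕ) / d ^ 2) := by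
            field_simp
        _ ≤ (a ^ (2 * r) / a ^ (2:ℕ) * ‖g k‖ ^ 2) * c⁻¹ ^ 2 :=
            mul_le_mul_of_nonneg_left key hP
        _ = c⁻¹ ^ 2 * (a ^ (2 * r) / a ^ (2:ℕ) * ‖g k‖ ^ 2) := by ring
    · funext k
      simp only [resolventMap]
      exact mul_div_cancel₀ _ (hd k)

lemma theta_le (σ Θ μ : ℝ) (hσ : 0 < σ) (hμ : 0 < μ) (n : ℕ) (hn : 1 ≤ n) :
    lam σ Θ μ n ≤ -(if Θ ≤ σ then (σ + Θ) / (4 * μ) else Real.sqrt (σ * Θ) / (2 * μ)) := by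
  have hn' : (1:ℝ) ≤ (n : ℝ) := by exact_mod_cast hn
  have hn0 : (0:ℝ) < (n : ℝ) := lt_of_lt_of_le one_pos hn'
  unfold lam
  apply neg_le_neg
  split_ifs with h
  · rw [div_le_div_iff₀ (by positivity) (by positivity)]
    have h1 : 0 ≤ ((n:ℝ) - 1) * (σ * (n:ℝ) - Θ) := by
      apply mul_nonneg (by linarith)
      nlinarith
    nlinarith
  · push_neg at h
    have hΘ : 0 < Θ := lt_trans hσ h
    have aux : 2 * Real.sqrt (σ * Θ) * (n:ℝ) ≤ σ * (n:ℝ) ^ 2 + Θ := by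
      nlinarith [sq_nonneg (Real.sqrt σ * (n:ℝ) - Real.sqrt Θ), sq_sqrt hσ.le, sq_sqrt hΘ.le,
        Real.sqrt_mul hσ.le Θ]
    rw [div_le_div_iff₀ (by positivity) (by positivity)]
    nlinarith [mul_le_mul_of_nonneg_left aux (by positivity : (0:ℝ) ≤ 2 * μ)]

end SpecAux

open SpecAux in
/-- The spectrum of the linearization `A` at the flat interface is the closure of the set
`{-(σk² + Θ)/(4μk) : k ∈ ℕ, k ≥ 1}`; moreover, if `σ + Θ > 0`, then every spectral value
has real part at most `-ϑ₀`. -/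
theorem spectrum_of_flat_linearization (σ Θ μ r : ℝ) (hσ : 0 < σ) (hμ : 0 < μ) :
    spectrumSet σ Θ μ r =
      closure {z : ℂ | ∃ k : ℕ, 1 ≤ k ∧
        z = ((-((σ * (k : ℝ) ^ 2 + Θ) / (4 * μ * (k : ℝ))) : ℝ) : ℂ)} ∧
    (0 < σ + Θ →
      ∀ z ∈ spectrumSet σ Θ μ r,
        z.re ≤ -(if Θ ≤ σ then (σ + Θ) / (4 * μ) else Real.sqrt (σ * Θ) / (2 * μ))) := by
  have hEeq : {z : ℂ | ∃ k : ℕ, 1 ≤ k ∧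
      z = ((-((σ * (k : ℝ) ^ 2 + Θ) / (4 * μ * (k : ℝ))) : ℝ) : ℂ)} = Eset σ Θ μ := rfl
  have part1 : spectrumSet σ Θ μ r = closure (Eset σ Θ μ) := by
    apply Set.Subset.antisymm
    · intro z hz
      by_contra hnot
      apply hz
      rw [Metric.mem_closure_iff] at hnot
      push_neg at hnot
      obtain ⟨ε, hε, hfarE⟩ := hnot
      have hfar : ∀ k : {k : ℤ // k ≠ 0}, ε ≤ ‖z - ((eigenvalue σ Θ μ k : ℝ) : ℂ)‖ := by
        intro k
        have hkmem : ((lam σ Θ μ k.1.natAbs : ℝ) : ℂ) ∈ Eset σ Θ μ :=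
          ⟨k.1.natAbs, one_le_natAbs k, rfl⟩
        have h1 := hfarE _ hkmem
        rw [dist_eq_norm] at h1
        rw [eig_eq]
        exact h1
      obtain ⟨c, hc, hlow⟩ := exists_lower σ Θ μ hσ hμ z ε hε hfar
      have hup : ∀ k : {k : ℤ // k ≠ 0},
          ‖z - ((eigenvalue σ Θ μ k : ℝ) : ℂ)‖ ≤ (‖z‖ + (σ + |Θ|) / (4 * μ)) * |(k.1 : ℝ)| := by
        intro k
        have h1 := abs_eig_le σ Θ μ hσ hμ k
        have h2 : ‖z - ((eigenvalue σ Θ μ k : ℝ) : ℂ)‖ ≤ ‖z‖ + |eigenvalue σ Θ μ k| := by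
          calc ‖z - ((eigenvalue σ Θ μ k : ℝ) : ℂ)‖
              ≤ ‖z‖ + ‖((eigenvalue σ Θ μ k : ℝ) : ℂ)‖ := norm_sub_le _ _
            _ = ‖z‖ + |eigenvalue σ Θ μ k| := by rw [Complex.norm_real, Real.norm_eq_abs]
        have ha1 := one_le_absk k
        nlinarith [norm_nonneg z]
      exact bijOn_resolvent σ Θ μ r z ε c _ hε hc (by positivity) hfar hlow hup
    · rw [(isClosed_Eset σ Θ μ hσ hμ).closure_eq]
      rintro z ⟨n, hn, rfl⟩
      exact lam_mem_spectrum σ Θ μ r n hn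
  constructor
  · rw [hEeq]
    exact part1
  · intro hσΘ z hz
    rw [part1] at hz
    have hsub : closure (Eset σ Θ μ) ⊆
        {w : ℂ | w.re ≤ -(if Θ ≤ σ then (σ + Θ) / (4 * μ) else Real.sqrt (σ * Θ) / (2 * μ))} := by
      apply closure_minimal _ (isClosed_le Complex.continuous_re continuous_const)
      rintro w ⟨n, hn, rfl⟩
      simp only [Set.mem_setOf_eq, Complex.ofReal_re]
      exact theta_le σ Θ μ hσ hμ n hn
    exact hsub hz
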